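/- For every k ≥ 1, |AMS_{3k+1}| = 2|AMS_{3k}|. -/

import Mathlib

/-- `w` (read on positions `1,…,2n`) is a Stirling permutation of order `n`:
each value `1,…,n` appears exactly twice, all letters lie in `[1,n]`, and every
value between the two copies of a value exceeds it. -/
def IsStirling (n : ℕ) (w : ℕ → ℕ) : Prop :=
  (∀ k, 1 ≤ k → k ≤ n → ((Finset.Icc 1 (2*n)).filter (fun i => w i = k)).card = 2) ∧
  (∀ i, 1 ≤ i → i ≤ 2*n → 1 ≤ w i ∧ w i ≤ n) ∧
  (∀ i j l, 1 ≤ i → i < j → j < l → l ≤ 2*n → w i = w l → w i < w j)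

/-- The set of mesas of `w`: values `m` with `w(i-1) < w(i) = w(i+1) = m > w(i+2)`
for some `2 ≤ i ≤ 2n-2`. -/
def MesaSet (n : ℕ) (w : ℕ → ℕ) : Set ℕ :=
  {m | ∃ i, 2 ≤ i ∧ i + 2 ≤ 2*n ∧ w (i-1) < w i ∧ w i = w (i+1) ∧ w (i+2) < w i ∧ w i = m}

/-- The collection of admissible mesa sets of order `n`. -/
def AMS (n : ℕ) : Set (Set ℕ) := {M | ∃ w, IsStirling n w ∧ MesaSet n w = M}

namespace AMS1


variable {n a g p : ℕ} {w : ℕ → ℕ}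

/-- mesa window predicate -/
def win (w : ℕ → ℕ) (i : ℕ) : Prop :=
  w (i-1) < w i ∧ w i = w (i+1) ∧ w (i+2) < w i

lemma mem_mesa {m : ℕ} :
    m ∈ MesaSet n w ↔ ∃ i, 2 ≤ i ∧ i + 2 ≤ 2*n ∧ win w i ∧ w i = m := by
  constructor
  · rintro ⟨i, h1, h2, h3, h4, h5, h6⟩; exact ⟨i, h1, h2, ⟨h3, h4, h5⟩, h6⟩
  · rintro ⟨i, h1, h2, ⟨h3, h4, h5⟩, h6⟩; exact ⟨i, h1, h2, h3, h4, h5, h6⟩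

lemma stir_lb (h : IsStirling n w) {i : ℕ} (h1 : 1 ≤ i) (h2 : i ≤ 2*n) : 1 ≤ w i :=
  (h.2.1 i h1 h2).1

lemma stir_ub (h : IsStirling n w) {i : ℕ} (h1 : 1 ≤ i) (h2 : i ≤ 2*n) : w i ≤ n :=
  (h.2.1 i h1 h2).2

lemma three_pos (h : IsStirling n w) {x y z : ℕ} (h1 : 1 ≤ x) (hxy : x < y) (hyz : y < z)
    (hz : z ≤ 2*n) (e1 : w x = w y) (e2 : w y = w z) : False := by
  have := h.2.2 x y z h1 hxy hyz hz (e1.trans e2); omega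

lemma two_copies (h : IsStirling n w) {v : ℕ} (hp1 : 1 ≤ p) (hp2 : p+1 ≤ 2*n)
    (e1 : w p = v) (e2 : w (p+1) = v) {x : ℕ} (hx1 : 1 ≤ x) (hx2 : x ≤ 2*n) (hx : w x = v) :
    x = p ∨ x = p+1 := by
  by_contra hc
  push_neg at hc
  rcases Nat.lt_or_ge x p with hlt | hge
  · exact three_pos h hx1 hlt (by omega) hp2 (hx.trans e1.symm) (e1.trans e2.symm)
  · have : p + 1 < x := by omega
    exact three_pos h hp1 (by omega) this hx2 (e1.trans e2.symm) (e2.trans hx.symm)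

/-- the two copies of the top value `n+1` are adjacent -/
lemma top_pair (h : IsStirling (n+1) w) (hn : 1 ≤ n) :
    ∃ g, g ≤ 2*n ∧ w (g+1) = n+1 ∧ w (g+2) = n+1 := by
  have hcard := h.1 (n+1) (by omega) le_rfl
  obtain ⟨x, y, hxy, hs⟩ := Finset.card_eq_two.1 hcard
  -- wlog x < y
  have hx : x ∈ Finset.Icc 1 (2*(n+1)) ∧ w x = n+1 := by
    have : x ∈ (Finset.Icc 1 (2*(n+1))).filter (fun i => w i = n+1) := by rw [hs]; simp
    simpa using this
  have hy : y ∈ Finset.Icc 1 (2*(n+1)) ∧ w y = n+1 := by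
    have : y ∈ (Finset.Icc 1 (2*(n+1))).filter (fun i => w i = n+1) := by rw [hs]; simp
    simpa using this
  simp only [Finset.mem_Icc] at hx hy
  rcases Nat.lt_or_ge x y with hlt | hge
  · -- show y = x+1
    have hy1 : y = x + 1 := by
      by_contra hne
      have h3 := h.2.2 x (x+1) y hx.1.1 (by omega) (by omega) hy.1.2 (hx.2.trans hy.2.symm)
      have := stir_ub h (i := x+1) (by omega) (by omega)
      omega
    exact ⟨x - 1, by omega, by rw [show x - 1 + 1 = x by omega]; exact hx.2,
      by rw [show x - 1 + 2 = y by omega]; exact hy.2⟩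
  · have hlt : y < x := by omega
    have hy1 : x = y + 1 := by
      by_contra hne
      have h3 := h.2.2 y (y+1) x hy.1.1 (by omega) (by omega) hx.1.2 (hy.2.trans hx.2.symm)
      have := stir_ub h (i := y+1) (by omega) (by omega)
      omega
    exact ⟨y - 1, by omega, by rw [show y - 1 + 1 = y by omega]; exact hy.2,
      by rw [show y - 1 + 2 = x by omega]; exact hx.2⟩

lemma mesa_val_mem (h : IsStirling n w) {m : ℕ} (hm : m ∈ MesaSet n w) : 1 ≤ m ∧ m ≤ n := by
  obtain ⟨i, h1, h2, _, hv⟩ := mem_mesa.1 hm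
  subst hv
  exact ⟨stir_lb h (by omega) (by omega), stir_ub h (by omega) (by omega)⟩






def ins (w : ℕ → ℕ) (g x : ℕ) : ℕ → ℕ :=
  fun i => if i ≤ g then w i else if i ≤ g + 2 then x else w (i - 2)

def rem (w : ℕ → ℕ) (g : ℕ) : ℕ → ℕ :=
  fun i => if i ≤ g then w i else w (i + 2)

lemma ins_A {x c : ℕ} (h : x ≤ g) : ins w g c x = w x := if_pos h
lemma ins_B {x c : ℕ} (h1 : g + 1 ≤ x) (h2 : x ≤ g + 2) : ins w g c x = c := by
  unfold ins; rw [if_neg (by omega), if_pos h2]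
lemma ins_C {x c : ℕ} (h1 : g + 3 ≤ x) : ins w g c x = w (x - 2) := by
  unfold ins; rw [if_neg (by omega), if_neg (by omega)]
lemma rem_A {x : ℕ} (h : x ≤ g) : rem w g x = w x := if_pos h
lemma rem_C {x : ℕ} (h : g + 1 ≤ x) : rem w g x = w (x + 2) := if_neg (by omega)

lemma stir_lb' (h : IsStirling n w) {i : ℕ} (h1 : 1 ≤ i) (h2 : i ≤ 2*n) : 1 ≤ w i :=
  (h.2.1 i h1 h2).1
lemma stir_ub' (h : IsStirling n w) {i : ℕ} (h1 : 1 ≤ i) (h2 : i ≤ 2*n) : w i ≤ n :=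
  (h.2.1 i h1 h2).2

lemma stirling_ins_top (h : IsStirling n w) (hg : g ≤ 2*n) :
    IsStirling (n+1) (ins w g (n+1)) := by
  refine ⟨?_, ?_, ?_⟩
  · intro k hk1 hk2
    rcases Nat.lt_or_ge k (n+1) with hkn | hkn
    · have key : ((Finset.Icc 1 (2*(n+1))).filter (fun i => ins w g (n+1) i = k)).card
          = ((Finset.Icc 1 (2*n)).filter (fun i => w i = k)).card := by
        apply Finset.card_bij' (i := fun a _ => if a ≤ g then a else a - 2)
          (j := fun a _ => if a ≤ g then a else a + 2)
        · intro x hx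
          simp only [Finset.mem_filter, Finset.mem_Icc] at hx ⊢
          obtain ⟨⟨hx1, hx2⟩, hxv⟩ := hx
          rcases Nat.lt_or_ge g x with hA | hA
          · rcases Nat.lt_or_ge (g+2) x with hC | hC
            · rw [ins_C (by omega)] at hxv
              rw [if_neg (by omega)]
              exact ⟨⟨by omega, by omega⟩, hxv⟩
            · rw [ins_B (by omega) (by omega)] at hxv; omega
          · rw [ins_A hA] at hxv
            rw [if_pos hA]
            exact ⟨⟨hx1, by omega⟩, hxv⟩
        · intro x hx
          simp only [Finset.mem_filter, Finset.mem_Icc] at hx ⊢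
          obtain ⟨⟨hx1, hx2⟩, hxv⟩ := hx
          rcases Nat.lt_or_ge g x with hA | hA
          · rw [if_neg (by omega)]
            refine ⟨⟨by omega, by omega⟩, ?_⟩
            rw [ins_C (by omega)]
            simpa using hxv
          · rw [if_pos hA]
            exact ⟨⟨hx1, by omega⟩, by rw [ins_A hA]; exact hxv⟩
        · intro x hx
          simp only [Finset.mem_filter, Finset.mem_Icc] at hx
          obtain ⟨⟨hx1, hx2⟩, hxv⟩ := hx
          rcases Nat.lt_or_ge g x with hA | hA
          · have hC : g + 2 < x := by
              by_contra hB
              rw [ins_B (by omega) (by omega)] at hxv; omega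
            split_ifs <;> omega
          · split_ifs <;> omega
        · intro x hx
          simp only [Finset.mem_filter, Finset.mem_Icc] at hx
          split_ifs <;> omega
      rw [key]
      exact h.1 k hk1 (by omega)
    · have hk : k = n+1 := by omega
      subst hk
      have key : (Finset.Icc 1 (2*(n+1))).filter (fun i => ins w g (n+1) i = n+1)
          = {g+1, g+2} := by
        ext x
        simp only [Finset.mem_filter, Finset.mem_Icc, Finset.mem_insert, Finset.mem_singleton]
        constructor
        · rintro ⟨⟨hx1, hx2⟩, hx⟩
          rcases Nat.lt_or_ge g x with hA | hA
          · rcases Nat.lt_or_ge (g+2) x with hC | hC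
            · rw [ins_C (by omega)] at hx
              have := stir_ub' h (i := x-2) (by omega) (by omega); omega
            · omega
          · rw [ins_A hA] at hx
            have := stir_ub' h (i := x) hx1 (by omega); omega
        · rintro (rfl | rfl)
          · exact ⟨⟨by omega, by omega⟩, ins_B (by omega) (by omega)⟩
          · exact ⟨⟨by omega, by omega⟩, ins_B (by omega) (by omega)⟩
      rw [key, Finset.card_insert_of_notMem (by simp), Finset.card_singleton]
  · intro i hi1 hi2
    rcases Nat.lt_or_ge g i with hA | hA
    · rcases Nat.lt_or_ge (g+2) i with hC | hC
      · rw [ins_C (by omega)]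
        have := h.2.1 (i-2) (by omega) (by omega); omega
      · rw [ins_B (by omega) (by omega)]; omega
    · rw [ins_A hA]
      have := h.2.1 i hi1 (by omega); omega
  · intro i j l hi hij hjl hl heq
    -- regions
    rcases Nat.lt_or_ge g i with hiA | hiA
    · rcases Nat.lt_or_ge (g+2) i with hiC | hiC
      · -- i in C, so j l in C
        rw [ins_C (x := i) (by omega)] at heq ⊢
        rw [ins_C (x := l) (by omega)] at heq
        rw [ins_C (x := j) (by omega)]
        exact h.2.2 (i-2) (j-2) (l-2) (by omega) (by omega) (by omega) (by omega) heq
      · -- i in B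
        rw [ins_B (x := i) (by omega) (by omega)] at heq
        rcases Nat.lt_or_ge (g+2) l with hlC | hlC
        · rw [ins_C (x := l) (by omega)] at heq
          have := stir_ub' h (i := l-2) (by omega) (by omega); omega
        · -- l in B too : i = g+1, l = g+2, no j strictly between
          omega
    · -- i in A
      rw [ins_A (x := i) hiA] at heq ⊢
      rcases Nat.lt_or_ge g l with hlA | hlA
      · rcases Nat.lt_or_ge (g+2) l with hlC | hlC
        · -- l in C
          rw [ins_C (x := l) (by omega)] at heq
          rcases Nat.lt_or_ge g j with hjA | hjA
          · rcases Nat.lt_or_ge (g+2) j with hjC | hjC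
            · rw [ins_C (x := j) (by omega)]
              exact h.2.2 i (j-2) (l-2) hi (by omega) (by omega) (by omega) heq
            · rw [ins_B (x := j) (by omega) (by omega)]
              have := stir_ub' h (i := i) hi (by omega); omega
          · rw [ins_A (x := j) hjA]
            exact h.2.2 i j (l-2) hi hij (by omega) (by omega) heq
        · -- l in B
          rw [ins_B (x := l) (by omega) (by omega)] at heq
          have := stir_ub' h (i := i) hi (by omega); omega
      · -- l in A : j in A
        rw [ins_A (x := l) hlA] at heq
        rw [ins_A (x := j) (by omega)]
        exact h.2.2 i j l hi hij hjl (by omega) heq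

lemma stirling_rem_top (h : IsStirling (n+1) w) (hg : g ≤ 2*n)
    (e1 : w (g+1) = n+1) (e2 : w (g+2) = n+1) : IsStirling n (rem w g) := by
  have htop : ∀ x, 1 ≤ x → x ≤ 2*(n+1) → w x = n+1 → x = g+1 ∨ x = g+2 := by
    intro x hx1 hx2 hx
    exact two_copies h (p := g+1) (by omega) (by omega) e1 (by simpa using e2) hx1 hx2 hx
  refine ⟨?_, ?_, ?_⟩
  · intro k hk1 hk2
    have key : ((Finset.Icc 1 (2*n)).filter (fun i => rem w g i = k)).card
        = ((Finset.Icc 1 (2*(n+1))).filter (fun i => w i = k)).card := by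
      apply Finset.card_bij' (i := fun a _ => if a ≤ g then a else a + 2)
        (j := fun a _ => if a ≤ g then a else a - 2)
      · intro x hx
        simp only [Finset.mem_filter, Finset.mem_Icc] at hx ⊢
        obtain ⟨⟨hx1, hx2⟩, hxv⟩ := hx
        rcases Nat.lt_or_ge g x with hA | hA
        · rw [rem_C (by omega)] at hxv
          rw [if_neg (by omega)]
          exact ⟨⟨by omega, by omega⟩, hxv⟩
        · rw [rem_A hA] at hxv
          rw [if_pos hA]
          exact ⟨⟨hx1, by omega⟩, hxv⟩
      · intro x hx
        simp only [Finset.mem_filter, Finset.mem_Icc] at hx ⊢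
        obtain ⟨⟨hx1, hx2⟩, hxv⟩ := hx
        have hxne : x ≠ g+1 ∧ x ≠ g+2 := by
          constructor <;> { rintro rfl; omega }
        rcases Nat.lt_or_ge g x with hA | hA
        · have hx3 : g + 3 ≤ x := by omega
          rw [if_neg (by omega)]
          refine ⟨⟨by omega, by omega⟩, ?_⟩
          rw [rem_C (by omega), show x - 2 + 2 = x by omega]
          exact hxv
        · rw [if_pos hA]
          exact ⟨⟨hx1, by omega⟩, by rw [rem_A hA]; exact hxv⟩
      · intro x hx
        split_ifs <;> omega
      · intro x hx
        simp only [Finset.mem_filter, Finset.mem_Icc] at hx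
        obtain ⟨⟨hx1, hx2⟩, hxv⟩ := hx
        have hxne : x ≠ g+1 ∧ x ≠ g+2 := by
          constructor <;> { rintro rfl; omega }
        split_ifs <;> omega
    rw [key]
    exact h.1 k hk1 (by omega)
  · intro i hi1 hi2
    rcases Nat.lt_or_ge g i with hA | hA
    · rw [rem_C (by omega)]
      have hb := h.2.1 (i+2) (by omega) (by omega)
      have := htop (i+2) (by omega) (by omega)
      rcases Nat.lt_or_ge (w (i+2)) (n+1) with hlt | hge
      · omega
      · have : i + 2 = g+1 ∨ i + 2 = g + 2 := htop (i+2) (by omega) (by omega) (by omega)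
        omega
    · rw [rem_A hA]
      have hb := h.2.1 i hi1 (by omega)
      rcases Nat.lt_or_ge (w i) (n+1) with hlt | hge
      · omega
      · have : i = g+1 ∨ i = g + 2 := htop i hi1 (by omega) (by omega)
        omega
  · intro i j l hi hij hjl hl heq
    rcases Nat.lt_or_ge g i with hiA | hiA
    · rw [rem_C (x := i) (by omega)] at heq ⊢
      rw [rem_C (x := l) (by omega)] at heq
      rw [rem_C (x := j) (by omega)]
      exact h.2.2 (i+2) (j+2) (l+2) (by omega) (by omega) (by omega) (by omega) heq
    · rw [rem_A (x := i) hiA] at heq ⊢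
      rcases Nat.lt_or_ge g l with hlA | hlA
      · rw [rem_C (x := l) (by omega)] at heq
        rcases Nat.lt_or_ge g j with hjA | hjA
        · rw [rem_C (x := j) (by omega)]
          exact h.2.2 i (j+2) (l+2) hi (by omega) (by omega) (by omega) heq
        · rw [rem_A (x := j) hjA]
          exact h.2.2 i j (l+2) hi hij (by omega) (by omega) heq
      · rw [rem_A (x := l) hlA] at heq
        rw [rem_A (x := j) (by omega)]
        exact h.2.2 i j l hi hij hjl (by omega) heq


/-- an old mesa survives top-pair insertion at a gap avoiding its window -/
lemma mesa_ins_of_avoid {i c : ℕ} (h2 : 2 ≤ i) (h2n : i + 2 ≤ 2*n) (hw : win w i)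
    (havoid : i + 2 ≤ g ∨ g + 2 ≤ i) (hgn : g ≤ 2*n) :
    w i ∈ MesaSet (n+1) (ins w g c) := by
  rcases havoid with hL | hR
  · have e1 : ins w g c (i-1) = w (i-1) := ins_A (by omega)
    have e2 : ins w g c i = w i := ins_A (by omega)
    have e3 : ins w g c (i+1) = w (i+1) := ins_A (by omega)
    have e4 : ins w g c (i+2) = w (i+2) := ins_A (by omega)
    refine mem_mesa.2 ⟨i, h2, by omega, ?_, ?_⟩
    · exact ⟨by rw [e1, e2]; exact hw.1, by rw [e2, e3]; exact hw.2.1,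
        by rw [e4, e2]; exact hw.2.2⟩
    · rw [e2]
  · refine mem_mesa.2 ⟨i + 2, by omega, by omega, ?_, ?_⟩
    · have e1 : ins w g c (i + 2 - 1) = w (i - 1) := by
        rw [ins_C (by omega)]; congr 1 <;> omega
      have e2 : ins w g c (i + 2) = w i := by
        rw [ins_C (by omega)]; congr 1 <;> omega
      have e3 : ins w g c (i + 2 + 1) = w (i + 1) := by
        rw [ins_C (by omega)]; congr 1 <;> omega
      have e4 : ins w g c (i + 2 + 2) = w (i + 2) := by
        rw [ins_C (by omega)]; congr 1 <;> omega
      exact ⟨by rw [e1, e2]; exact hw.1, by rw [e2, e3]; exact hw.2.1,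
        by rw [e4, e2]; exact hw.2.2⟩
    · have e2 : ins w g c (i + 2) = w i := by
        rw [ins_C (by omega)]; congr 1 <;> omega
      rw [e2]

/-- a sub-top mesa of the inserted word comes from an old mesa -/
lemma mesa_ins_new {m : ℕ} (h : IsStirling n w) (hgn : g ≤ 2*n)
    (hm : m ∈ MesaSet (n+1) (ins w g (n+1))) (hmn : m ≤ n) :
    m ∈ MesaSet n w := by
  obtain ⟨i, h2, h2n, hw, hv⟩ := mem_mesa.1 hm
  -- none of the window positions can be in the block {g+1, g+2}
  have hvals : ins w g (n+1) i = m := hv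
  have hplat : ins w g (n+1) (i+1) = m := by rw [← hw.2.1]; exact hv
  have hnb1 : ins w g (n+1) (i-1) < m := by rw [← hv]; exact hw.1
  have hnb2 : ins w g (n+1) (i+2) < m := by rw [← hv]; exact hw.2.2
  have hbm : ∀ x, g+1 ≤ x → x ≤ g+2 → ins w g (n+1) x = n+1 := fun x hx1 hx2 => ins_B hx1 hx2
  -- position i not in block
  have hi : i ≤ g ∨ g + 3 ≤ i := by
    by_contra hc
    push_neg at hc
    have := hbm i (by omega) (by omega); omega
  have hi1 : i + 1 ≤ g ∨ g + 3 ≤ i + 1 := by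
    by_contra hc
    push_neg at hc
    have := hbm (i+1) (by omega) (by omega); omega
  have hi2 : i + 2 ≤ g ∨ g + 3 ≤ i + 2 := by
    by_contra hc
    push_neg at hc
    have := hbm (i+2) (by omega) (by omega); omega
  have him1 : i - 1 ≤ g ∨ g + 3 ≤ i - 1 := by
    by_contra hc
    push_neg at hc
    have := hbm (i-1) (by omega) (by omega); omega
  -- so the whole window is on one side
  rcases hi2 with hside | hother
  · -- all left
    have e1 : ins w g (n+1) (i-1) = w (i-1) := ins_A (by omega)
    have e2 : ins w g (n+1) i = w i := ins_A (by omega)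
    have e3 : ins w g (n+1) (i+1) = w (i+1) := ins_A (by omega)
    have e4 : ins w g (n+1) (i+2) = w (i+2) := ins_A (by omega)
    refine mem_mesa.2 ⟨i, h2, by omega, ?_, ?_⟩
    · exact ⟨by rw [← e1, ← e2]; exact hw.1, by rw [← e2, ← e3]; exact hw.2.1,
        by rw [← e4, ← e2]; exact hw.2.2⟩
    · rw [← e2]; exact hv
  · -- all right : i - 1 ≥ g + 3
    have hR : g + 3 ≤ i - 1 := by omega
    have e1 : ins w g (n+1) (i - 1) = w (i - 2 - 1) := by
      rw [ins_C (by omega)]; congr 1 <;> omega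
    have e2 : ins w g (n+1) i = w (i - 2) := by
      rw [ins_C (by omega)]
    have e3 : ins w g (n+1) (i + 1) = w (i - 2 + 1) := by
      rw [ins_C (by omega)]; congr 1 <;> omega
    have e4 : ins w g (n+1) (i + 2) = w (i - 2 + 2) := by
      rw [ins_C (by omega)]; congr 1 <;> omega
    refine mem_mesa.2 ⟨i - 2, by omega, by omega, ?_, ?_⟩
    · exact ⟨by rw [← e1, ← e2]; exact hw.1, by rw [← e2, ← e3]; exact hw.2.1,
        by rw [← e4, ← e2]; exact hw.2.2⟩
    · rw [← e2]; exact hv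

/-- inserting the top pair at an interior gap creates the top mesa -/
lemma mesa_ins_self (h : IsStirling n w) (hg1 : 1 ≤ g) (hg2 : g + 1 ≤ 2*n) :
    (n+1) ∈ MesaSet (n+1) (ins w g (n+1)) := by
  refine mem_mesa.2 ⟨g+1, by omega, by omega, ?_, ins_B (by omega) (by omega)⟩
  unfold win
  rw [show g + 1 - 1 = g by omega, ins_A (le_refl g), ins_B (by omega) (by omega),
    ins_B (x := g+1+1) (by omega) (by omega), ins_C (x := g+1+2) (by omega),
    show g + 1 + 2 - 2 = g + 1 by omega]
  have h1 := stir_ub' h (i := g) hg1 (by omega)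
  have h2 := stir_ub' h (i := g+1) (by omega) (by omega)
  omega

/-- appending the top pair at the very end creates no top mesa -/
lemma mesa_ins_end_not (h : IsStirling n w) :
    (n+1) ∉ MesaSet (n+1) (ins w (2*n) (n+1)) := by
  intro hm
  obtain ⟨i, h2, h2n, hw, hv⟩ := mem_mesa.1 hm
  -- i ≤ 2n, so value is from w, ≤ n
  have : ins w (2*n) (n+1) i = w i := ins_A (by omega)
  have := stir_ub' h (i := i) (by omega) (by omega)
  omega

/-- a sub-top mesa survives removal of the top pair -/
lemma mesa_rem {m : ℕ} (h : IsStirling (n+1) w) (hg : g ≤ 2*n)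
    (e1 : w (g+1) = n+1) (e2 : w (g+2) = n+1)
    (hm : m ∈ MesaSet (n+1) w) (hmn : m ≤ n) :
    m ∈ MesaSet n (rem w g) := by
  obtain ⟨i, h2, h2n, hw, hv⟩ := mem_mesa.1 hm
  have hne : ∀ x, 1 ≤ x → x ≤ 2*(n+1) → w x ≤ m → (x ≠ g+1 ∧ x ≠ g+2) := by
    intro x hx1 hx2 hxm
    constructor <;> { rintro rfl; omega }
  have k1 := hne (i-1) (by omega) (by omega) (by have := hw.1; omega)
  have k2 := hne i (by omega) (by omega) (by omega)
  have k3 := hne (i+1) (by omega) (by omega) (by have := hw.2.1; omega)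
  have k4 := hne (i+2) (by omega) (by omega) (by have := hw.2.2; omega)
  -- window on one side of the block
  rcases Nat.lt_or_ge g (i + 2) with hR | hL
  · -- i + 2 ≥ g + 3, whole window right of block
    have hR3 : g + 3 ≤ i - 1 := by omega
    refine mem_mesa.2 ⟨i - 2, by omega, by omega, ?_, ?_⟩
    · unfold win
      have f1 : rem w g (i - 2 - 1) = w (i - 1) := by
        rw [rem_C (by omega)]; congr 1 <;> omega
      have f2 : rem w g (i - 2) = w i := by
        rw [rem_C (by omega)]; congr 1 <;> omega
      have f3 : rem w g (i - 2 + 1) = w (i + 1) := by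
        rw [rem_C (by omega)]; congr 1 <;> omega
      have f4 : rem w g (i - 2 + 2) = w (i + 2) := by
        rw [rem_C (by omega)]; congr 1 <;> omega
      rw [f1, f2, f3, f4]
      exact hw
    · have f2 : rem w g (i - 2) = w i := by
        rw [rem_C (by omega)]; congr 1 <;> omega
      rw [f2]; exact hv
  · -- whole window left of block
    refine mem_mesa.2 ⟨i, h2, by omega, ?_, ?_⟩
    · unfold win
      rw [rem_A (x := i-1) (by omega), rem_A (x := i) (by omega),
        rem_A (x := i+1) (by omega), rem_A (x := i+2) (by omega)]
      exact hw
    · rw [rem_A (by omega)]; exact hv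

/-- consecutive mesa windows are at least 3 apart -/
lemma win_spacing {i i' : ℕ} (h1 : win w i) (h2 : win w i') (hlt : i < i') (hi : 2 ≤ i) :
    i + 3 ≤ i' := by
  by_contra hc
  push_neg at hc
  have hcase : i' = i + 1 ∨ i' = i + 2 := by omega
  rcases hcase with rfl | rfl
  · have a1 := h1.2.1
    have a2 := h2.1
    rw [show i + 1 - 1 = i by omega] at a2
    omega
  · have a1 := h1.2.1
    have a2 := h1.2.2
    have a3 := h2.1
    rw [show i + 2 - 1 = i + 1 by omega] at a3
    omega

/-- existence of a good gap for words of order 3k -/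
lemma good_gap (k : ℕ) (hk : 1 ≤ k) (w : ℕ → ℕ) :
    ∃ g, 1 ≤ g ∧ g + 1 ≤ 2*(3*k) ∧
      ∀ i, 2 ≤ i → i + 2 ≤ 2*(3*k) → win w i → (i + 2 ≤ g ∨ g + 2 ≤ i) := by
  classical
  set n := 3*k with hn
  set I := (Finset.Icc 2 (2*n-2)).filter (fun i => win w i) with hI
  have hIcard : I.card ≤ 2*k - 1 := by
    have : I.card ≤ (Finset.range (2*k-1)).card := by
      apply Finset.card_le_card_of_injOn (f := fun i => (i - 2)/3)
      · intro x hx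
        simp only [hI, Finset.mem_coe, Finset.mem_filter, Finset.mem_Icc] at hx
        simp only [Finset.mem_coe, Finset.mem_range]
        omega
      · intro x hx y hy hxy
        have hx' : x ∈ I := Finset.mem_coe.1 hx
        have hy' : y ∈ I := Finset.mem_coe.1 hy
        simp only [hI, Finset.mem_filter, Finset.mem_Icc] at hx' hy'
        have hxy' : (x - 2) / 3 = (y - 2) / 3 := hxy
        rcases Nat.lt_trichotomy x y with h | h | h
        · have := win_spacing hx'.2 hy'.2 h hx'.1.1; omega
        · exact h
        · have := win_spacing hy'.2 hx'.2 h hy'.1.1; omega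
    simpa using this
  set F := I.biUnion (fun i => ({i-1, i, i+1} : Finset ℕ)) with hF
  have hFcard : F.card ≤ 3 * (2*k - 1) := by
    calc F.card ≤ ∑ i ∈ I, ({i-1, i, i+1} : Finset ℕ).card := Finset.card_biUnion_le
    _ ≤ ∑ _i ∈ I, 3 := by
        apply Finset.sum_le_sum
        intro i _
        apply le_trans (Finset.card_insert_le _ _)
        apply Nat.succ_le_succ
        apply le_trans (Finset.card_insert_le _ _)
        simp
    _ = 3 * I.card := by rw [Finset.sum_const]; ring
    _ ≤ 3 * (2*k-1) := by omega
  have hex : ((Finset.Icc 1 (2*n-1)) \ F).Nonempty := by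
    rw [← Finset.card_pos]
    have h1 : (Finset.Icc 1 (2*n-1)).card = 2*n-1 := by
      rw [Nat.card_Icc]; omega
    have h2 := Finset.le_card_sdiff F (Finset.Icc 1 (2*n-1))
    omega
  obtain ⟨g, hg⟩ := hex
  rw [Finset.mem_sdiff, Finset.mem_Icc] at hg
  refine ⟨g, hg.1.1, by omega, ?_⟩
  intro i hi2 hi2n hwin
  have hiI : i ∈ I := by
    simp only [hI, Finset.mem_filter, Finset.mem_Icc]
    exact ⟨⟨hi2, by omega⟩, hwin⟩
  have : g ∉ ({i-1, i, i+1} : Finset ℕ) := by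
    intro hmem
    exact hg.2 (Finset.mem_biUnion.2 ⟨i, hiI, hmem⟩)
  simp only [Finset.mem_insert, Finset.mem_singleton] at this
  push_neg at this
  omega


/-- the suffix of `w` starting at position `2a+1` is an increasing stack of adjacent pairs -/
def Stacked (n a : ℕ) (w : ℕ → ℕ) : Prop :=
  a ≤ n ∧
  (∀ j, 2*a+2*j+2 ≤ 2*n → w (2*a+2*j+1) = w (2*a+2*j+2)) ∧
  (∀ j j', j < j' → 2*a+2*j'+2 ≤ 2*n → w (2*a+2*j+1) < w (2*a+2*j'+1))

lemma stacked_full : Stacked n n w := by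
  refine ⟨le_rfl, ?_, ?_⟩
  · intro j hj; exact absurd hj (by omega)
  · intro j j' _ hj; exact absurd hj (by omega)

/-- all mesa windows live in the non-stacked prefix -/
lemma mesa_interior (hst : IsStirling n w) (hsk : Stacked n a w) {i : ℕ}
    (h2 : 2 ≤ i) (h2n : i + 2 ≤ 2*n) (hw : win w i) : i + 1 ≤ 2*a := by
  by_contra hc
  push_neg at hc
  rcases Nat.lt_or_ge (2*a) i with hgt | hle
  · -- i ≥ 2a+1 : i is a stack position
    set t := i - (2*a+1) with ht
    rcases Nat.even_or_odd t with ⟨j, hj⟩ | ⟨j, hj⟩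
    · -- i = 2a+2j+1 : increasing contradicts w (i+2) < w i
      have hi : i = 2*a+2*j+1 := by omega
      have hguard : 2*a+2*(j+1)+2 ≤ 2*n := by omega
      have hinc := hsk.2.2 j (j+1) (by omega) hguard
      have : 2*a+2*(j+1)+1 = i + 2 := by omega
      rw [this, ← hi] at hinc
      exact absurd hw.2.2 (by omega)
    · -- i = 2a+2j+2 : pair partner gives three equal positions
      have hi : i = 2*a+2*j+2 := by omega
      have hpair := hsk.2.1 j (by omega)
      have e1 : w (i-1) = w i := by
        rw [show i - 1 = 2*a+2*j+1 by omega, hi]; exact hpair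
      exact three_pos hst (x := i-1) (y := i) (z := i+1) (by omega) (by omega) (by omega)
        (by omega) e1 hw.2.1
  · -- i = 2a : plateau straddles the boundary
    have hi : i = 2*a := by omega
    have hpair := hsk.2.1 0 (by omega)
    have e2 : w (i+1) = w (i+2) := by
      rw [show i + 1 = 2*a+2*0+1 by omega, show i + 2 = 2*a+2*0+2 by omega]; exact hpair
    exact three_pos hst (x := i) (y := i+1) (z := i+2) (by omega) (by omega) (by omega)
      (by omega) hw.2.1 e2

/-- move the adjacent pair at `(p, p+1)` so that it occupies `(q-1, q)` -/
def mv (w : ℕ → ℕ) (p q c : ℕ) : ℕ → ℕ :=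
  fun i => if i < p then w i else if i ≤ q - 2 then w (i+2) else if i ≤ q then c else w i

section MV

variable {q c : ℕ}

lemma mv_A {x : ℕ} (h : x < p) : mv w p q c x = w x := if_pos h
lemma mv_B {x : ℕ} (h1 : p ≤ x) (h2 : x ≤ q - 2) : mv w p q c x = w (x+2) := by
  unfold mv; rw [if_neg (by omega), if_pos h2]
lemma mv_C {x : ℕ} (hq : p + 2 ≤ q) (h1 : q - 1 ≤ x) (h2 : x ≤ q) : mv w p q c x = c := by
  unfold mv; rw [if_neg (by omega), if_neg (by omega), if_pos h2]
lemma mv_D {x : ℕ} (hq : p ≤ q) (h1 : q < x) : mv w p q c x = w x := by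
  unfold mv; rw [if_neg (by omega), if_neg (by omega), if_neg (by omega)]

end MV

/-- one step of the mesa-killing process -/
lemma kill_step (hst : IsStirling n w) (hsk : Stacked n a w)
    (hp2 : 2 ≤ p) (hp2n : p + 2 ≤ 2*n) (hwin : win w p) :
    ∃ v, IsStirling n v ∧ Stacked n (a-1) v ∧
      (∀ m, m ∈ MesaSet n w → m ≠ w p → m ∈ MesaSet n v) := by
  classical
  set c := w p with hc
  have hpa : p + 1 ≤ 2*a := mesa_interior hst hsk hp2 hp2n hwin
  have han : a ≤ n := hsk.1
  have ha1 : 1 ≤ a := by omega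
  -- two copies of c are at p, p+1
  have hcc : ∀ x, 1 ≤ x → x ≤ 2*n → w x = c → x = p ∨ x = p+1 := by
    intro x hx1 hx2 hx
    exact two_copies hst (by omega) (by omega) rfl hwin.2.1.symm hx1 hx2 hx
  -- find insertion depth d in the stack
  have hPex : ∃ j, 2*n < 2*a+2*j+2 ∨ c < w (2*a+2*j+1) := ⟨n - a, Or.inl (by omega)⟩
  set d := Nat.find hPex with hd
  have hPd := Nat.find_spec hPex
  have hbelow : ∀ j, j < d → 2*a+2*j+2 ≤ 2*n ∧ w (2*a+2*j+1) < c := by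
    intro j hj
    have := Nat.find_min hPex hj
    push_neg at this
    refine ⟨by omega, ?_⟩
    rcases Nat.lt_or_ge (w (2*a+2*j+1)) c with h | h
    · exact h
    · have heq : w (2*a+2*j+1) = c := by omega
      rcases hcc (2*a+2*j+1) (by omega) (by omega) heq with h' | h' <;> omega
  have hd_le : d ≤ n - a := Nat.find_le (Or.inl (by omega))
  have habove : ∀ j, d ≤ j → 2*a+2*j+2 ≤ 2*n → c < w (2*a+2*j+1) := by
    intro j hdj hguard
    have hdg : 2*a+2*d+2 ≤ 2*n := by omega
    have hcd : c < w (2*a+2*d+1) := by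
      rcases hPd with h | h
      · omega
      · exact h
    rcases Nat.eq_or_lt_of_le hdj with rfl | hlt
    · exact hcd
    · have := hsk.2.2 d j hlt hguard
      omega
  set q := 2*a + 2*d with hq
  have hq2n : q ≤ 2*n := by omega
  have hqp : p + 2 ≤ q := by
    by_cases hd0 : d = 0
    · rcases Nat.lt_or_ge (p+1) (2*a) with h | h
      · omega
      · -- p + 1 = 2a : the value after the plateau is the stack bottom, smaller than c
        have hg : 2*a+2*0+2 ≤ 2*n := by omega
        have h1 := habove 0 (by omega) hg
        rw [show 2*a+2*0+1 = p+2 by omega] at h1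
        have h22 : w (p+2) < c := hwin.2.2
        omega
    · omega
  set v := mv w p q c with hv
  -- no value straddles position q
  have hstr : ∀ x y, 1 ≤ x → x ≤ q → q < y → y ≤ 2*n → w x ≠ w y := by
    intro x y hx1 hxq hqy hy2n heq
    rcases Nat.lt_or_ge (2*a) x with hxS | hxI
    · -- x is a stack position below c's slot
      obtain ⟨jx, hx12⟩ : ∃ jx, (jx < d) ∧ (x = 2*a+2*jx+1 ∨ x = 2*a+2*jx+2) :=
        ⟨(x - (2*a+1)) / 2, by omega, by omega⟩
      have hjxd : jx < d := hx12.1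
      have hx12 := hx12.2
      have hguard : 2*a+2*jx+2 ≤ 2*n := (hbelow jx hjxd).1
      have hpair := hsk.2.1 jx hguard
      have h2q : 2*a+2*jx+2 ≤ q := by omega
      rcases hx12 with rfl | rfl
      · exact three_pos hst (x := 2*a+2*jx+1) (y := 2*a+2*jx+2) (z := y)
          (by omega) (by omega) (by omega) hy2n hpair (by rw [← hpair]; exact heq)
      · exact three_pos hst (x := 2*a+2*jx+1) (y := 2*a+2*jx+2) (z := y)
          (by omega) (by omega) (by omega) hy2n hpair heq
    · -- x interior, y a stack pair position
      obtain ⟨jy, hy12⟩ : ∃ jy, y = 2*a+2*jy+1 ∨ y = 2*a+2*jy+2 :=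
        ⟨(y - (2*a+1)) / 2, by omega⟩
      have hguard : 2*a+2*jy+2 ≤ 2*n := by omega
      have hpair := hsk.2.1 jy hguard
      rcases hy12 with rfl | rfl
      · exact three_pos hst (x := x) (y := 2*a+2*jy+1) (z := 2*a+2*jy+2)
          (by omega) (by omega) (by omega) (by omega) heq hpair
      · exact three_pos hst (x := x) (y := 2*a+2*jy+1) (z := 2*a+2*jy+2)
          (by omega) (by omega) (by omega) (by omega) (heq.trans hpair.symm) hpair
  refine ⟨v, ⟨?_, ?_, ?_⟩, ⟨by omega, ?_, ?_⟩, ?_⟩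
  · -- counts
    intro k hk1 hk2
    by_cases hkc : k = c
    · subst hkc
      have key : (Finset.Icc 1 (2*n)).filter (fun i => v i = c) = {q-1, q} := by
        ext x
        simp only [Finset.mem_filter, Finset.mem_Icc, Finset.mem_insert, Finset.mem_singleton]
        constructor
        · rintro ⟨⟨hx1, hx2⟩, hxv⟩
          rcases Nat.lt_or_ge x p with hA | hA
          · rw [hv, mv_A hA] at hxv
            rcases hcc x hx1 hx2 hxv with h | h <;> omega
          · rcases Nat.lt_or_ge (q-2) x with hBC | hB
            · rcases Nat.lt_or_ge q x with hD | hC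
              · rw [hv, mv_D (by omega) hD] at hxv
                rcases hcc x hx1 hx2 hxv with h | h <;> omega
              · omega
            · rw [hv, mv_B hA hB] at hxv
              rcases hcc (x+2) (by omega) (by omega) hxv with h | h <;> omega
        · rintro (rfl | rfl)
          · exact ⟨⟨by omega, by omega⟩, by rw [hv, mv_C hqp (by omega) (by omega)]⟩
          · exact ⟨⟨by omega, by omega⟩, by rw [hv, mv_C hqp (by omega) (by omega)]⟩
      rw [key, Finset.card_insert_of_notMem (by simp; omega), Finset.card_singleton]
    · have key : ((Finset.Icc 1 (2*n)).filter (fun i => v i = k)).card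
          = ((Finset.Icc 1 (2*n)).filter (fun i => w i = k)).card := by
        apply Finset.card_bij'
          (i := fun x _ => if x < p then x else if x ≤ q-2 then x+2 else x)
          (j := fun x _ => if x < p then x else if x ≤ q then x - 2 else x)
        · intro x hx
          simp only [Finset.mem_filter, Finset.mem_Icc] at hx ⊢
          obtain ⟨⟨hx1, hx2⟩, hxv⟩ := hx
          rcases Nat.lt_or_ge x p with hA | hA
          · rw [if_pos hA]
            rw [hv, mv_A hA] at hxv
            exact ⟨⟨hx1, hx2⟩, hxv⟩
          · rcases Nat.lt_or_ge (q-2) x with hBC | hB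
            · rcases Nat.lt_or_ge q x with hD | hC
              · rw [if_neg (by omega), if_neg (by omega)]
                rw [hv, mv_D (by omega) hD] at hxv
                exact ⟨⟨by omega, hx2⟩, hxv⟩
              · rw [hv, mv_C hqp (by omega) (by omega)] at hxv
                exact absurd hxv.symm hkc
            · rw [if_neg (by omega), if_pos hB]
              rw [hv, mv_B hA hB] at hxv
              exact ⟨⟨by omega, by omega⟩, hxv⟩
        · intro x hx
          simp only [Finset.mem_filter, Finset.mem_Icc] at hx ⊢
          obtain ⟨⟨hx1, hx2⟩, hxv⟩ := hx
          have hxne : x ≠ p ∧ x ≠ p+1 := by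
            constructor <;> rintro rfl
            · exact hkc (hxv.symm.trans hc.symm)
            · exact hkc (hxv.symm.trans (hwin.2.1.symm.trans hc.symm))
          rcases Nat.lt_or_ge x p with hA | hA
          · rw [if_pos hA]
            refine ⟨⟨hx1, hx2⟩, ?_⟩
            rw [hv, mv_A hA]; exact hxv
          · have hx3 : p + 2 ≤ x := by omega
            rcases Nat.lt_or_ge q x with hD | hC
            · rw [if_neg (by omega), if_neg (by omega)]
              refine ⟨⟨hx1, hx2⟩, ?_⟩
              rw [hv, mv_D (by omega) hD]; exact hxv
            · rw [if_neg (by omega), if_pos hC]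
              refine ⟨⟨by omega, by omega⟩, ?_⟩
              rw [hv, mv_B (by omega) (by omega), show x - 2 + 2 = x by omega]
              exact hxv
        · intro x hx
          simp only [Finset.mem_filter, Finset.mem_Icc] at hx
          obtain ⟨⟨hx1, hx2⟩, hxv⟩ := hx
          have hnotC : x < p ∨ x ≤ q - 2 ∨ q < x := by
            by_contra hcon
            push_neg at hcon
            rw [hv, mv_C hqp (by omega) (by omega)] at hxv
            exact hkc hxv.symm
          split_ifs <;> omega
        · intro x hx
          simp only [Finset.mem_filter, Finset.mem_Icc] at hx
          obtain ⟨⟨hx1, hx2⟩, hxv⟩ := hx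
          have hxne : x ≠ p ∧ x ≠ p+1 := by
            constructor <;> rintro rfl
            · exact hkc (hxv.symm.trans hc.symm)
            · exact hkc (hxv.symm.trans (hwin.2.1.symm.trans hc.symm))
          split_ifs <;> omega
      rw [key]
      exact hst.1 k hk1 hk2
  · -- bounds
    intro i hi1 hi2
    rcases Nat.lt_or_ge i p with hA | hA
    · rw [hv, mv_A hA]; exact hst.2.1 i hi1 hi2
    · rcases Nat.lt_or_ge (q-2) i with hBC | hB
      · rcases Nat.lt_or_ge q i with hD | hC
        · rw [hv, mv_D (by omega) hD]; exact hst.2.1 i hi1 hi2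
        · rw [hv, mv_C hqp (by omega) hC]; exact hst.2.1 p (by omega) (by omega)
      · rw [hv, mv_B hA hB]; exact hst.2.1 (i+2) (by omega) (by omega)
  · -- betweenness
    intro i j l hi hij hjl hl heq
    rcases Nat.lt_or_ge i p with hiA | hiA
    · rw [hv, mv_A hiA] at heq ⊢
      rcases Nat.lt_or_ge l p with hlA | hlA
      · rw [mv_A hlA] at heq
        rw [mv_A (by omega)]
        exact hst.2.2 i j l hi hij hjl (by omega) heq
      · rcases Nat.lt_or_ge q l with hlD | hlC'
        · rw [mv_D (by omega) hlD] at heq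
          exact absurd heq (hstr i l (by omega) (by omega) hlD (by omega))
        · rcases Nat.lt_or_ge (q-2) l with hlC | hlB
          · rw [mv_C hqp (by omega) (by omega)] at heq
            rcases hcc i (by omega) (by omega) heq with h | h <;> omega
          · rw [mv_B hlA hlB] at heq
            rcases Nat.lt_or_ge j p with hjA | hjB
            · rw [mv_A hjA]
              exact hst.2.2 i j (l+2) hi hij (by omega) (by omega) heq
            · rw [mv_B hjB (by omega)]
              exact hst.2.2 i (j+2) (l+2) hi (by omega) (by omega) (by omega) heq
    · rcases Nat.lt_or_ge (q-2) i with hiCD | hiB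
      · rcases Nat.lt_or_ge q i with hiD | hiC
        · -- i in D, so j l in D
          rw [hv, mv_D (by omega) hiD] at heq ⊢
          rw [mv_D (by omega) (by omega)] at heq
          rw [mv_D (by omega) (by omega)]
          exact hst.2.2 i j l (by omega) hij hjl (by omega) heq
        · -- i in C
          rw [hv, mv_C hqp (by omega) hiC] at heq ⊢
          rcases Nat.lt_or_ge q l with hlD | hlC
          · rw [mv_D (by omega) hlD] at heq
            rcases hcc l (by omega) (by omega) heq.symm with h | h <;> omega
          · -- l also in C : i = q-1, l = q, no j in between
            exfalso; omega
      · -- i in B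
        rw [hv, mv_B hiA hiB] at heq ⊢
        rcases Nat.lt_or_ge q l with hlD | hlC'
        · rw [mv_D (by omega) hlD] at heq
          exact absurd heq (hstr (i+2) l (by omega) (by omega) hlD (by omega))
        · rcases Nat.lt_or_ge (q-2) l with hlC | hlB
          · rw [mv_C hqp (by omega) (by omega)] at heq
            rcases hcc (i+2) (by omega) (by omega) heq with h | h <;> omega
          · rw [mv_B (by omega) hlB] at heq
            rw [mv_B (by omega) (by omega)]
            exact hst.2.2 (i+2) (j+2) (l+2) (by omega) (by omega) (by omega) (by omega) heq
  · -- stacked pairs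
    intro j hj
    rcases Nat.lt_trichotomy j d with hjd | rfl | hjd
    · have hb := hbelow j hjd
      have e1 : v (2*(a-1)+2*j+1) = w (2*a+2*j+1) := by
        rw [hv, mv_B (by omega) (by omega)]; congr 1 <;> omega
      have e2 : v (2*(a-1)+2*j+2) = w (2*a+2*j+2) := by
        rw [hv, mv_B (by omega) (by omega)]; congr 1 <;> omega
      rw [e1, e2]; exact hsk.2.1 j hb.1
    · have e1 : v (2*(a-1)+2*d+1) = c := by
        rw [hv, mv_C hqp (by omega) (by omega)]
      have e2 : v (2*(a-1)+2*d+2) = c := by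
        rw [hv, mv_C hqp (by omega) (by omega)]
      rw [e1, e2]
    · have e1 : v (2*(a-1)+2*j+1) = w (2*a+2*(j-1)+1) := by
        rw [hv, mv_D (by omega) (by omega)]; congr 1 <;> omega
      have e2 : v (2*(a-1)+2*j+2) = w (2*a+2*(j-1)+2) := by
        rw [hv, mv_D (by omega) (by omega)]; congr 1 <;> omega
      rw [e1, e2]; exact hsk.2.1 (j-1) (by omega)
  · -- stacked increasing
    intro j j' hjj' hg'
    rcases Nat.lt_trichotomy j' d with hj'd | rfl | hj'd
    · have hbj := hbelow j (by omega)
      have hbj' := hbelow j' hj'd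
      have e1 : v (2*(a-1)+2*j+1) = w (2*a+2*j+1) := by
        rw [hv, mv_B (by omega) (by omega)]; congr 1 <;> omega
      have e2 : v (2*(a-1)+2*j'+1) = w (2*a+2*j'+1) := by
        rw [hv, mv_B (by omega) (by omega)]; congr 1 <;> omega
      rw [e1, e2]; exact hsk.2.2 j j' hjj' hbj'.1
    · have hbj := hbelow j hjj'
      have e1 : v (2*(a-1)+2*j+1) = w (2*a+2*j+1) := by
        rw [hv, mv_B (by omega) (by omega)]; congr 1 <;> omega
      have e2 : v (2*(a-1)+2*d+1) = c := by
        rw [hv, mv_C hqp (by omega) (by omega)]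
      rw [e1, e2]; exact hbj.2
    · have e2 : v (2*(a-1)+2*j'+1) = w (2*a+2*(j'-1)+1) := by
        rw [hv, mv_D (by omega) (by omega)]; congr 1 <;> omega
      have hab := habove (j'-1) (by omega) (by omega)
      rcases Nat.lt_trichotomy j d with hjd | rfl | hjd
      · have hbj := hbelow j hjd
        have e1 : v (2*(a-1)+2*j+1) = w (2*a+2*j+1) := by
          rw [hv, mv_B (by omega) (by omega)]; congr 1 <;> omega
        rw [e1, e2]; omega
      · have e1 : v (2*(a-1)+2*d+1) = c := by
          rw [hv, mv_C hqp (by omega) (by omega)]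
        rw [e1, e2]; omega
      · have e1 : v (2*(a-1)+2*j+1) = w (2*a+2*(j-1)+1) := by
          rw [hv, mv_D (by omega) (by omega)]; congr 1 <;> omega
        rw [e1, e2]
        exact hsk.2.2 (j-1) (j'-1) (by omega) (by omega)
  · -- mesa preservation
    intro m hm hmc
    obtain ⟨i, h2, h2n, hw, hvv⟩ := mem_mesa.1 hm
    have hia : i + 1 ≤ 2*a := mesa_interior hst hsk h2 h2n hw
    have hip : i ≠ p := by
      rintro rfl; exact hmc hvv.symm
    have hip1 : i ≠ p + 1 := by
      rintro rfl
      exact hmc (hvv.symm.trans (hwin.2.1.symm))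
    have hi1p : i + 1 ≠ p := by
      intro h
      apply hmc
      rw [← hvv, hw.2.1, h]
    have hsplit : i + 2 ≤ p ∨ p + 2 ≤ i := by omega
    rcases hsplit with hL | hR
    · rcases Nat.lt_or_ge (i+2) p with hLL | hLE
      · -- whole window left of the pair
        have e1 : v (i-1) = w (i-1) := by rw [hv]; exact mv_A (by omega)
        have e2 : v i = w i := by rw [hv]; exact mv_A (by omega)
        have e3 : v (i+1) = w (i+1) := by rw [hv]; exact mv_A (by omega)
        have e4 : v (i+2) = w (i+2) := by rw [hv]; exact mv_A (by omega)
        refine mem_mesa.2 ⟨i, h2, by omega, ?_, ?_⟩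
        · exact ⟨by rw [e1, e2]; exact hw.1, by rw [e2, e3]; exact hw.2.1,
            by rw [e4, e2]; exact hw.2.2⟩
        · rw [e2]; exact hvv
      · -- i + 2 = p
        have hip2 : i + 2 = p := by omega
        have e1 : v (i-1) = w (i-1) := by rw [hv]; exact mv_A (by omega)
        have e2 : v i = w i := by rw [hv]; exact mv_A (by omega)
        have e3 : v (i+1) = w (i+1) := by rw [hv]; exact mv_A (by omega)
        have e4 : v (i+2) = w (p+2) := by
          rw [hv, show i + 2 = p by omega, mv_B (le_refl p) (by omega)]
        refine mem_mesa.2 ⟨i, h2, by omega, ?_, ?_⟩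
        · refine ⟨by rw [e1, e2]; exact hw.1, by rw [e2, e3]; exact hw.2.1, ?_⟩
          rw [e4, e2]
          have h1 : w (p+2) < c := hwin.2.2
          have h2' : w (i+2) < w i := hw.2.2
          rw [show i + 2 = p by omega] at h2'
          omega
        · rw [e2]; exact hvv
    · -- i ≥ p + 2 : shifted window, new witness i - 2
      have e2 : v (i-2) = w i := by
        rw [hv, mv_B (by omega) (by omega)]; congr 1 <;> omega
      have e3 : v (i-1) = w (i+1) := by
        rw [hv, mv_B (by omega) (by omega)]; congr 1 <;> omega
      have e1 : v (i-3) < m := by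
        rcases Nat.lt_or_ge (i-3) p with hA | hB
        · -- i = p + 2 : the left neighbor is w (p-1)
          have hi22 : i = p + 2 := by omega
          rw [hv, mv_A hA]
          have h1 : w (p-1) < c := hwin.1
          have h3 := hw.1
          rw [hvv] at h3
          rw [show i - 1 = p + 1 by omega] at h3
          have h4 : w p = w (p+1) := hwin.2.1
          rw [show i - 3 = p - 1 by omega]
          omega
        · rw [hv, mv_B hB (by omega), show i - 3 + 2 = i - 1 by omega]
          have h3 := hw.1
          rw [hvv] at h3
          exact h3
      have e4 : v i < m := by
        rcases Nat.lt_or_ge (q-2) i with hiC | hiB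
        · -- boundary case: i = q - 1, value c
          rw [hv, mv_C hqp (by omega) (by omega)]
          have hi2a : i = 2*a - 1 ∧ q = 2*a := by omega
          have hg : 2*a+2*0+2 ≤ 2*n := by omega
          have h1 := habove 0 (by omega) hg
          rw [show 2*a+2*0+1 = i + 2 by omega] at h1
          have h2' := hw.2.2
          rw [hvv] at h2'
          omega
        · rw [hv, mv_B (by omega) hiB]
          have h2' := hw.2.2
          rw [hvv] at h2'
          exact h2'
      refine mem_mesa.2 ⟨i-2, by omega, by omega, ?_, ?_⟩
      · refine ⟨?_, ?_, ?_⟩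
        · rw [show i - 2 - 1 = i - 3 by omega, e2, hvv]; exact e1
        · rw [e2, show i - 2 + 1 = i - 1 by omega, e3]; exact hw.2.1
        · rw [show i - 2 + 2 = i by omega, e2, hvv]; exact e4
      · rw [e2]; exact hvv

/-- any subset of a realizable mesa set is realizable (downward closure) -/
lemma kill (n : ℕ) : ∀ a (w : ℕ → ℕ) (S : Set ℕ), IsStirling n w → Stacked n a w →
    S ⊆ MesaSet n w → S ∈ AMS n := by
  intro a
  induction a with
  | zero =>
    intro w S hst hsk hS
    have hempty : MesaSet n w = ∅ := by
      ext m
      simp only [Set.mem_empty_iff_false, iff_false]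
      intro hm
      obtain ⟨i, h2, h2n, hw, _⟩ := mem_mesa.1 hm
      have := mesa_interior hst hsk h2 h2n hw
      omega
    have hSempty : S = ∅ := by
      rw [hempty] at hS
      exact Set.subset_empty_iff.1 hS
    exact ⟨w, hst, by rw [hempty, hSempty]⟩
  | succ a ih =>
    intro w S hst hsk hS
    by_cases hEq : MesaSet n w = S
    · exact ⟨w, hst, hEq⟩
    · have hex : ∃ m, m ∈ MesaSet n w ∧ m ∉ S := by
        by_contra hcon
        push_neg at hcon
        exact hEq (Set.Subset.antisymm hcon hS)
      obtain ⟨m, hm, hmS⟩ := hex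
      obtain ⟨i, h2, h2n, hw, hvv⟩ := mem_mesa.1 hm
      obtain ⟨v, hstv, hskv, hpres⟩ := kill_step hst hsk h2 h2n hw
      have hskv' : Stacked n a v := hskv
      refine ih v S hstv hskv' ?_
      intro m' hm'S
      refine hpres m' (hS hm'S) ?_
      rw [hvv]
      rintro rfl
      exact hmS hm'S

lemma subset_realizable (n : ℕ) (w : ℕ → ℕ) (S : Set ℕ) (hst : IsStirling n w)
    (hS : S ⊆ MesaSet n w) : S ∈ AMS n :=
  kill n n w S hst stacked_full hS


lemma mesa_subset_Icc (h : IsStirling n w) : MesaSet n w ⊆ Set.Icc 1 n := by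
  intro m hm
  have := mesa_val_mem h hm
  exact ⟨this.1, this.2⟩

lemma ams_finite (n : ℕ) : (AMS n).Finite := by
  apply Set.Finite.subset (Set.Finite.finite_subsets (Set.finite_Icc 1 n))
  rintro M ⟨w, hst, rfl⟩
  exact mesa_subset_Icc hst

lemma ams_succ_eq (k : ℕ) (hk : 1 ≤ k) :
    AMS (3*k+1) = AMS (3*k) ∪ ((insert (3*k+1) : Set ℕ → Set ℕ) '' AMS (3*k)) := by
  have hn : 3*k+1 = (3*k)+1 := rfl
  set n := 3*k with hdefn
  apply Set.Subset.antisymm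
  · rintro M ⟨w, hst, rfl⟩
    obtain ⟨g, hg, e1, e2⟩ := top_pair hst (by omega)
    have hrem : IsStirling n (rem w g) := stirling_rem_top hst hg e1 e2
    have hsub : MesaSet (n+1) w \ {n+1} ⊆ MesaSet n (rem w g) := by
      intro m hm
      have hm1 := (mesa_val_mem hst hm.1).2
      have hm2 : m ≠ n+1 := hm.2
      exact mesa_rem hst hg e1 e2 hm.1 (by omega)
    have hAMS : (MesaSet (n+1) w \ {n+1}) ∈ AMS n :=
      subset_realizable n (rem w g) _ hrem hsub
    by_cases htop : (n+1) ∈ MesaSet (n+1) w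
    · right
      refine ⟨MesaSet (n+1) w \ {n+1}, hAMS, ?_⟩
      ext x
      simp only [Set.mem_insert_iff, Set.mem_diff, Set.mem_singleton_iff]
      constructor
      · rintro (rfl | ⟨hx, _⟩)
        · exact htop
        · exact hx
      · intro hx
        by_cases hxe : x = n+1
        · exact Or.inl hxe
        · exact Or.inr ⟨hx, hxe⟩
    · left
      have heq : MesaSet (n+1) w \ {n+1} = MesaSet (n+1) w := by
        ext x
        simp only [Set.mem_diff, Set.mem_singleton_iff]
        constructor
        · exact fun h => h.1
        · intro hx
          refine ⟨hx, ?_⟩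
          rintro rfl
          exact htop hx
      rwa [heq] at hAMS
  · rintro M (⟨v, hst, rfl⟩ | ⟨M0, ⟨v, hst, rfl⟩, rfl⟩)
    · -- append the top pair at the end
      have hst' : IsStirling (n+1) (ins v (2*n) (n+1)) := stirling_ins_top hst (le_refl _)
      refine ⟨ins v (2*n) (n+1), hst', ?_⟩
      apply Set.Subset.antisymm
      · intro m hm
        by_cases hmn : m = n+1
        · subst hmn
          exact absurd hm (mesa_ins_end_not hst)
        · have hub := (mesa_val_mem hst' hm).2
          exact mesa_ins_new hst (le_refl _) hm (by omega)
      · intro m hm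
        obtain ⟨i, h2, h2n, hw, hvv⟩ := mem_mesa.1 hm
        rw [← hvv]
        exact mesa_ins_of_avoid h2 h2n hw (Or.inl (by omega)) (le_refl _)
    · -- realize M0 ∪ {n+1} by inserting the top pair at a good gap
      obtain ⟨g, hg1, hg2, havoid⟩ := good_gap k hk v
      have hst' : IsStirling (n+1) (ins v g (n+1)) := stirling_ins_top hst (by omega)
      refine ⟨ins v g (n+1), hst', ?_⟩
      apply Set.Subset.antisymm
      · intro m hm
        by_cases hmn : m = n+1
        · subst hmn
          exact Set.mem_insert _ _
        · have hub := (mesa_val_mem hst' hm).2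
          exact Set.mem_insert_of_mem _ (mesa_ins_new hst (by omega) hm (by omega))
      · intro m hm
        rcases hm with rfl | hm
        · exact mesa_ins_self hst hg1 hg2
        · obtain ⟨i, h2, h2n, hw, hvv⟩ := mem_mesa.1 hm
          rw [← hvv]
          exact mesa_ins_of_avoid h2 h2n hw (havoid i h2 h2n hw) (by omega)

end AMS1

theorem AMS_card_3k1 (k : ℕ) (hk : 1 ≤ k) :
    (AMS (3*k+1)).ncard = 2 * (AMS (3*k)).ncard := by
  have hfin : (AMS (3*k)).Finite := AMS1.ams_finite _
  have hsub : ∀ M ∈ AMS (3*k), M ⊆ Set.Icc 1 (3*k) := by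
    rintro M ⟨w, hst, rfl⟩
    exact AMS1.mesa_subset_Icc hst
  have hdisj : Disjoint (AMS (3*k)) ((insert (3*k+1) : Set ℕ → Set ℕ) '' AMS (3*k)) := by
    rw [Set.disjoint_left]
    rintro M hM ⟨M0, _, rfl⟩
    have h1 : (3*k+1) ∈ insert (3*k+1) M0 := Set.mem_insert _ _
    have h2 := hsub _ hM h1
    simp only [Set.mem_Icc] at h2
    omega
  have hinj : Set.InjOn (insert (3*k+1) : Set ℕ → Set ℕ) (AMS (3*k)) := by
    intro M hM M' hM' hMM'
    have hM1 : (3*k+1) ∉ M := by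
      intro h
      have := hsub _ hM h
      simp only [Set.mem_Icc] at this
      omega
    have hM2 : (3*k+1) ∉ M' := by
      intro h
      have := hsub _ hM' h
      simp only [Set.mem_Icc] at this
      omega
    ext x
    constructor
    · intro hx
      have : x ∈ insert (3*k+1) M' := hMM' ▸ Set.mem_insert_of_mem _ hx
      rcases this with rfl | h
      · exact absurd hx hM1
      · exact h
    · intro hx
      have : x ∈ insert (3*k+1) M := hMM' ▸ Set.mem_insert_of_mem _ hx
      rcases this with rfl | h
      · exact absurd hx hM2
      · exact h
  rw [AMS1.ams_succ_eq k hk, Set.ncard_union_eq hdisj hfin (hfin.image _),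
    Set.ncard_image_of_injOn hinj]
  ring
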